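/- For every β > 0, every σ ∈ Ω, and every x ∈ V, the Digital Annealer spin-flip probability decomposes as P_β^{DA}(σ, σ^x) = (1/|V|) e^{-β E_x(σ)^+} + ∑_{S⊆V, S∋x} (1/|S| - 1/|V|) ∏_{y∈S} e^{-β E_y(σ)^+} ∏_{y∈V∖S} (1 - e^{-β E_y(σ)^+}), and the second summand on the right-hand side is nonnegative. -/

import Mathlib

open Finset Filter
open scoped Classical

noncomputable section

/-- The real spin value of a Boolean spin: `true ↦ +1`, `false ↦ -1`. -/
def spin (b : Bool) : ℝ := if b then 1 else -1

variable {V : Type*} [Fintype V] [DecidableEq V]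

/-- The configuration obtained from `σ` by flipping the spin at `x`. -/
def flipConf (σ : V → Bool) (x : V) : V → Bool := Function.update σ x (!(σ x))

/-- The Ising Hamiltonian with couplings `J` and external fields `h`. -/
def Ham (J : V → V → ℝ) (h : V → ℝ) (σ : V → Bool) : ℝ :=
  -(1 / 2) * ∑ x : V, ∑ y : V, J x y * spin (σ x) * spin (σ y)
    - ∑ x : V, h x * spin (σ x)

/-- `Ecost J h x σ = H(σ^x) - H(σ)`, the energetic cost of flipping the spin at `x`. -/
def Ecost (J : V → V → ℝ) (h : V → ℝ) (x : V) (σ : V → Bool) : ℝ :=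
  Ham J h (flipConf σ x) - Ham J h σ

/-- Metropolis acceptance probability `exp(-β E_y(σ)^+)`. -/
def acc (J : V → V → ℝ) (h : V → ℝ) (β : ℝ) (σ : V → Bool) (y : V) : ℝ :=
  Real.exp (-β * max (Ecost J h y σ) 0)

/-- The Digital Annealer transition matrix. -/
def Pda (J : V → V → ℝ) (h : V → ℝ) (β : ℝ) (σ τ : V → Bool) : ℝ :=
  if τ = σ then ∏ y : V, (1 - acc J h β σ y)
  else ∑ x ∈ Finset.univ.filter (fun x => τ = flipConf σ x),
        ∑ S ∈ Finset.univ.powerset.filter (fun S : Finset V => x ∈ S),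
          ((S.card : ℝ))⁻¹ * (∏ y ∈ S, acc J h β σ y) * ∏ y ∈ Sᶜ, (1 - acc J h β σ y)

/-- The Gibbs distribution at inverse temperature `β`. -/
def gibbs (J : V → V → ℝ) (h : V → ℝ) (β : ℝ) (σ : V → Bool) : ℝ :=
  Real.exp (-β * Ham J h σ) / ∑ τ : V → Bool, Real.exp (-β * Ham J h τ)

/-- The quantity `R(σ, σ^x)` from the paper. -/
def Rw (J : V → V → ℝ) (h : V → ℝ) (β : ℝ) (σ : V → Bool) (x : V) : ℝ :=
  ∑ S ∈ (Finset.univ.erase x).powerset,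
    ((S.card : ℝ) + 1)⁻¹ * (∏ y ∈ S, acc J h β σ y) *
      ∏ y ∈ (Finset.univ.erase x) \ S, (1 - acc J h β σ y)

/-- `τ` is reachable from `σ` at height `E`. -/
def Reachable (H : (V → Bool) → ℝ) (E : ℝ) (σ τ : V → Bool) : Prop :=
  (σ = τ ∧ H σ ≤ E) ∨
    ∃ n : ℕ, 1 ≤ n ∧ ∃ p : ℕ → (V → Bool), p 0 = σ ∧ p n = τ ∧
      (∀ k, 1 ≤ k → k ≤ n → ∃ x, p k = flipConf (p (k - 1)) x) ∧
      (∀ i ≤ n, H (p i) ≤ E)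

/-- `σ` is a local minimum of `H`. -/
def IsLocMin (H : (V → Bool) → ℝ) (σ : V → Bool) : Prop :=
  ¬ ∃ τ, H τ < H σ ∧ Reachable H (H σ) σ τ

/-- `σ` is a ground state (global minimum) of `H`. -/
def IsGround (H : (V → Bool) → ℝ) (σ : V → Bool) : Prop := ∀ τ, H σ ≤ H τ

/-- The depth of a local minimum which is not a ground state: the smallest `E > 0` such
that some strictly lower state is reachable from `σ` at height `H(σ) + E`. -/
def depth (H : (V → Bool) → ℝ) (σ : V → Bool) : ℝ :=
  sInf {E : ℝ | 0 < E ∧ ∃ τ, H τ < H σ ∧ Reachable H (H σ + E) σ τ}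

/-- `γ*`: the maximum of the depths of the local minima of `H` that are not ground
states (`0` if every local minimum is a ground state). -/
def gammaStar (H : (V → Bool) → ℝ) : ℝ :=
  sSup ({0} ∪ {d : ℝ | ∃ σ, IsLocMin H σ ∧ ¬ IsGround H σ ∧ d = depth H σ})

end

section Aux
open Finset
open scoped Classical

variable {V : Type*} [Fintype V] [DecidableEq V]

lemma sum_over_sets_containing (a : V → ℝ) (x : V)
    (hsum : ∀ y, a y + (1 - a y) = 1) :
    ∑ S ∈ Finset.univ.powerset.filter (fun S : Finset V => x ∈ S),
      (∏ y ∈ S, a y) * ∏ y ∈ Sᶜ, (1 - a y) = a x := by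
  have key : ∑ S ∈ Finset.univ.powerset.filter (fun S : Finset V => x ∈ S),
      (∏ y ∈ S, a y) * ∏ y ∈ Sᶜ, (1 - a y)
      = ∑ T ∈ (Finset.univ.erase x).powerset,
          a x * ((∏ y ∈ T, a y) * ∏ y ∈ (Finset.univ.erase x) \ T, (1 - a y)) := by
    refine Finset.sum_nbij' (fun S => S.erase x) (fun T => insert x T) ?_ ?_ ?_ ?_ ?_
    · intro S hS
      simp only [mem_filter, mem_powerset] at hS
      simp only [mem_powerset]
      intro y hy
      simp only [mem_erase] at hy ⊢
      exact ⟨hy.1, mem_univ y⟩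
    · intro T hT
      simp only [mem_powerset] at hT
      simp only [mem_filter, mem_powerset]
      exact ⟨subset_univ _, mem_insert_self x T⟩
    · intro S hS
      simp only [mem_filter, mem_powerset] at hS
      exact Finset.insert_erase hS.2
    · intro T hT
      simp only [mem_powerset] at hT
      refine Finset.erase_insert ?_
      intro hx
      exact absurd (hT hx) (by simp)
    · intro S hS
      simp only [mem_filter, mem_powerset] at hS
      have hprod : ∏ y ∈ S, a y = a x * ∏ y ∈ S.erase x, a y :=
        (Finset.mul_prod_erase S a hS.2).symm
      have hcompl : Sᶜ = (Finset.univ.erase x) \ (S.erase x) := by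
        ext y
        simp only [mem_compl, mem_sdiff, mem_erase, mem_univ, and_true, true_and]
        rw [Finset.mem_sdiff, Finset.mem_erase, Finset.mem_erase]
        simp only [mem_univ, and_true]
        constructor
        · intro hy
          refine ⟨fun hyx => hy (hyx ▸ hS.2), fun hmem => hy hmem.2⟩
        · rintro ⟨hyx, hmem⟩ hyS
          exact hmem ⟨hyx, hyS⟩
      rw [hprod, hcompl]; ring
  rw [key, ← Finset.mul_sum, ← Finset.prod_add a (fun y => 1 - a y) (Finset.univ.erase x)]
  rw [Finset.prod_congr rfl (fun y _ => hsum y), Finset.prod_const_one, mul_one]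

end Aux

theorem Pda_flip_decomposition
    {V : Type*} [Fintype V] [DecidableEq V] [Nonempty V]
    (J : V → V → ℝ) (h : V → ℝ)
    (hJsymm : ∀ x y, J x y = J y x) (hJdiag : ∀ x, J x x = 0)
    (β : ℝ) (hβ : 0 < β) (σ : V → Bool) (x : V) :
    Pda J h β σ (flipConf σ x)
        = ((Fintype.card V : ℝ))⁻¹ * acc J h β σ x
          + ∑ S ∈ Finset.univ.powerset.filter (fun S : Finset V => x ∈ S),
              (((S.card : ℝ))⁻¹ - ((Fintype.card V : ℝ))⁻¹) *
                (∏ y ∈ S, acc J h β σ y) * ∏ y ∈ Sᶜ, (1 - acc J h β σ y)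
      ∧ 0 ≤ ∑ S ∈ Finset.univ.powerset.filter (fun S : Finset V => x ∈ S),
              (((S.card : ℝ))⁻¹ - ((Fintype.card V : ℝ))⁻¹) *
                (∏ y ∈ S, acc J h β σ y) * ∏ y ∈ Sᶜ, (1 - acc J h β σ y) := by
  
  classical
  set a : V → ℝ := acc J h β σ with ha
  have ha_pos : ∀ y, 0 < a y := fun y => Real.exp_pos _
  have ha_le : ∀ y, a y ≤ 1 := by
    intro y
    refine Real.exp_le_one_iff.mpr ?_
    have : 0 ≤ max (Ecost J h y σ) 0 := le_max_right _ _
    nlinarith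
  have hne : flipConf σ x ≠ σ := by
    intro hEq
    have := congrFun hEq x
    simp [flipConf] at this
  have hfilter : Finset.univ.filter (fun x' => flipConf σ x = flipConf σ x') = {x} := by
    ext x'
    simp only [Finset.mem_filter, Finset.mem_univ, true_and, Finset.mem_singleton]
    constructor
    · intro hEq
      by_contra hxx
      have h1 := congrFun hEq x
      simp [flipConf, Function.update, Ne.symm hxx] at h1
    · rintro rfl; rfl
  have hPda : Pda J h β σ (flipConf σ x)
      = ∑ S ∈ Finset.univ.powerset.filter (fun S : Finset V => x ∈ S),
          ((S.card : ℝ))⁻¹ * (∏ y ∈ S, a y) * ∏ y ∈ Sᶜ, (1 - a y) := by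
    rw [Pda, if_neg hne, hfilter, Finset.sum_singleton]
  have hsum1 : ∑ S ∈ Finset.univ.powerset.filter (fun S : Finset V => x ∈ S),
      (∏ y ∈ S, a y) * ∏ y ∈ Sᶜ, (1 - a y) = a x :=
    sum_over_sets_containing a x (fun y => by ring)
  have hnonneg : ∀ S ∈ Finset.univ.powerset.filter (fun S : Finset V => x ∈ S),
      0 ≤ (((S.card : ℝ))⁻¹ - ((Fintype.card V : ℝ))⁻¹) *
            (∏ y ∈ S, a y) * ∏ y ∈ Sᶜ, (1 - a y) := by
    intro S hS
    simp only [Finset.mem_filter, Finset.mem_powerset] at hS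
    have hcard_pos : 0 < S.card := Finset.card_pos.mpr ⟨x, hS.2⟩
    have hcard_le : S.card ≤ Fintype.card V := Finset.card_le_univ S
    have hcoef : ((Fintype.card V : ℝ))⁻¹ ≤ ((S.card : ℝ))⁻¹ := by
      apply inv_anti₀
      · exact_mod_cast hcard_pos
      · exact_mod_cast hcard_le
    have h1 : 0 ≤ ∏ y ∈ S, a y := Finset.prod_nonneg fun y _ => (ha_pos y).le
    have h2 : 0 ≤ ∏ y ∈ Sᶜ, (1 - a y) :=
      Finset.prod_nonneg fun y _ => by linarith [ha_le y]
    exact mul_nonneg (mul_nonneg (sub_nonneg.mpr hcoef) h1) h2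
  constructor
  · rw [hPda]
    have split : ∀ S : Finset V,
        ((S.card : ℝ))⁻¹ * (∏ y ∈ S, a y) * ∏ y ∈ Sᶜ, (1 - a y)
        = (((S.card : ℝ))⁻¹ - ((Fintype.card V : ℝ))⁻¹) *
            (∏ y ∈ S, a y) * ∏ y ∈ Sᶜ, (1 - a y)
          + ((Fintype.card V : ℝ))⁻¹ * ((∏ y ∈ S, a y) * ∏ y ∈ Sᶜ, (1 - a y)) := by
      intro S; ring
    rw [Finset.sum_congr rfl (fun S _ => split S), Finset.sum_add_distrib,
        ← Finset.mul_sum, hsum1, add_comm]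
  · exact Finset.sum_nonneg hnonneg
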